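/- There exists a graph G and a value α = β such that the α-domination number of G is strictly greater than the β-packing number of G. Specifically, for G = P_n with n ≥ 3 and α = β = 1/3, β-pack(P_n) = 0 while γ_{1/3}(P_n) = ⌈n/3⌉ > 0. -/

import Mathlib

open scoped Classical

/-- `S` satisfies the β-packing property: `S` is a proper subset of the vertex set
and every vertex outside `S` has at most a β-fraction of its neighbors inside `S`. -/
def PackProp {V : Type*} [Fintype V] (G : SimpleGraph V) (β : ℝ) (S : Finset V) : Prop :=
  S ≠ Finset.univ ∧
    ∀ v ∉ S, ((G.neighborFinset v ∩ S).card : ℝ) ≤ β * (G.degree v : ℝ)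

/-- `S` is a β-packing set: it satisfies the β-packing property and is maximal with it. -/
def IsBetaPacking {V : Type*} [Fintype V] (G : SimpleGraph V) (β : ℝ) (S : Finset V) : Prop :=
  PackProp G β S ∧ ∀ T : Finset V, PackProp G β T → S ⊆ T → S = T

/-- The β-packing number: maximum cardinality of a β-packing set. -/
noncomputable def betaPack {V : Type*} [Fintype V] (G : SimpleGraph V) (β : ℝ) : ℕ :=
  sSup {k : ℕ | ∃ S : Finset V, IsBetaPacking G β S ∧ S.card = k}

/-- `S` is an α-dominating set. -/
def IsAlphaDom {V : Type*} [Fintype V] (G : SimpleGraph V) (α : ℝ) (S : Finset V) : Prop :=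
  ∀ v ∉ S, α * (G.degree v : ℝ) ≤ ((G.neighborFinset v ∩ S).card : ℝ)

/-- The α-domination number: minimum cardinality of an α-dominating set. -/
noncomputable def alphaDomNum {V : Type*} [Fintype V] (G : SimpleGraph V) (α : ℝ) : ℕ :=
  sInf {k : ℕ | ∃ S : Finset V, IsAlphaDom G α S ∧ S.card = k}

open SimpleGraph

lemma path_deg_le (n : ℕ) (v : Fin n) : (pathGraph n).degree v ≤ 2 := by
  have h : (pathGraph n).degree v = ((pathGraph n).neighborFinset v).card := rfl
  rw [h]
  have hsub := Finset.card_le_card_of_injOn (f := Fin.val)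
    (s := (pathGraph n).neighborFinset v) (t := ({v.val + 1, v.val - 1} : Finset ℕ))
    (by
      intro u hu
      rw [Finset.mem_coe, mem_neighborFinset, pathGraph_adj] at hu
      simp only [Finset.mem_coe, Finset.mem_insert, Finset.mem_singleton]
      omega)
    (fun a _ b _ hab => Fin.ext hab)
  refine le_trans hsub (le_trans (Finset.card_insert_le _ _) ?_)
  simp

lemma path_deg_pos {n : ℕ} (hn : 2 ≤ n) (v : Fin n) : 0 < (pathGraph n).degree v := by
  rw [SimpleGraph.degree_pos_iff_exists_adj]
  by_cases h : v.val + 1 < n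
  · exact ⟨⟨v.val + 1, h⟩, by rw [pathGraph_adj]; left; rfl⟩
  · have hv := v.isLt
    refine ⟨⟨v.val - 1, by omega⟩, ?_⟩
    rw [pathGraph_adj]
    exact Or.inr (show v.val - 1 + 1 = v.val by omega)

lemma walk_not_mem {V : Type*} {G : SimpleGraph V} {S : Finset V}
    (h : ∀ v ∉ S, ∀ u, G.Adj v u → u ∉ S) {u w : V} (p : G.Walk u w) (hu : u ∉ S) : w ∉ S := by
  induction p with
  | nil => exact hu
  | cons ha _ ih => exact ih (h _ hu _ ha)

/-- In a graph of max degree ≤ 2, the (1/3)-packing condition forces no edges from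
outside `S` into `S`. Stated over a generic vertex type so that the `Finset.inter`
decidability instance matches the one in `PackProp`. -/
lemma packprop_no_cross {V : Type*} [Fintype V] {G : SimpleGraph V} {S : Finset V}
    (hdeg : ∀ v : V, G.degree v ≤ 2)
    (hcond : ∀ v ∉ S, ((G.neighborFinset v ∩ S).card : ℝ) ≤ (1/3 : ℝ) * (G.degree v : ℝ)) :
    ∀ v ∉ S, ∀ u, G.Adj v u → u ∉ S := by
  intro v hv u hadj hu
  refine absurd (hcond v hv) (not_le.mpr ?_)
  have hd : ((G.degree v : ℝ)) ≤ 2 := by exact_mod_cast hdeg v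
  refine lt_of_lt_of_le (show (1/3 : ℝ) * (G.degree v : ℝ) < 1 by linarith) ?_
  exact_mod_cast Finset.card_pos.mpr
    ⟨u, Finset.mem_inter.mpr ⟨(mem_neighborFinset _ _ _).mpr hadj, hu⟩⟩

/-- If every vertex outside `S` has a neighbour in `S` and degrees are ≤ 2, then `S`
is (1/3)-dominating. Generic vertex type for instance reasons. -/
lemma isAlphaDom_of_dom {V : Type*} [Fintype V] {G : SimpleGraph V} {S : Finset V}
    (hdeg : ∀ v : V, G.degree v ≤ 2)
    (hdom : ∀ v ∉ S, ∃ u ∈ S, G.Adj v u) :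
    IsAlphaDom G (1/3 : ℝ) S := by
  intro v hv
  obtain ⟨u, hu, hadj⟩ := hdom v hv
  have hd : ((G.degree v : ℝ)) ≤ 2 := by exact_mod_cast hdeg v
  refine le_trans (show (1/3 : ℝ) * (G.degree v : ℝ) ≤ 1 by linarith) ?_
  exact_mod_cast Finset.card_pos.mpr
    ⟨u, Finset.mem_inter.mpr ⟨(mem_neighborFinset _ _ _).mpr hadj, hu⟩⟩

/-- Conversely, a (1/3)-dominating set in a graph with all degrees positive is a
dominating set. Generic vertex type for instance reasons. -/
lemma dom_of_isAlphaDom {V : Type*} [Fintype V] {G : SimpleGraph V} {S : Finset V}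
    (hdeg : ∀ v : V, 0 < G.degree v)
    (hS : IsAlphaDom G (1/3 : ℝ) S) :
    ∀ v ∉ S, ∃ u ∈ S, G.Adj v u := by
  intro v hv
  have h1 := hS v hv
  have hd : (1 : ℝ) ≤ ((G.degree v : ℝ)) := by exact_mod_cast hdeg v
  have hpos := lt_of_lt_of_le (show (0 : ℝ) < (1/3 : ℝ) * (G.degree v : ℝ) by linarith) h1
  obtain ⟨u, hu⟩ := Finset.card_pos.mp (Nat.cast_pos.mp hpos)
  rw [Finset.mem_inter, mem_neighborFinset] at hu
  exact ⟨u, hu.2, hu.1⟩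

lemma packprop_empty {n : ℕ} (hn : 3 ≤ n) (S : Finset (Fin n))
    (hS : PackProp (pathGraph n) (1/3 : ℝ) S) : S = ∅ := by
  obtain ⟨hne, hcond⟩ := hS
  have key := packprop_no_cross (path_deg_le n) hcond
  by_contra hSne
  obtain ⟨s, hs⟩ := Finset.nonempty_iff_ne_empty.mpr hSne
  obtain ⟨t, ht⟩ : ∃ t, t ∉ S := by
    by_contra hall
    push_neg at hall
    exact hne (Finset.eq_univ_iff_forall.mpr hall)
  obtain ⟨m, rfl⟩ : ∃ m, n = m + 1 := ⟨n - 1, by omega⟩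
  obtain ⟨p⟩ := (pathGraph_connected m).preconnected t s
  exact walk_not_mem key p ht hs

lemma path_dominating_lb {n : ℕ} (S : Finset (Fin n))
    (hdom : ∀ v : Fin n, v ∉ S → ∃ u ∈ S, (pathGraph n).Adj v u) :
    n ≤ 3 * S.card := by
  have hcover : (Finset.univ : Finset (Fin n)) ⊆
      S.biUnion (fun s => insert s ((pathGraph n).neighborFinset s)) := by
    intro v _
    rw [Finset.mem_biUnion]
    by_cases hv : v ∈ S
    · exact ⟨v, hv, Finset.mem_insert_self _ _⟩
    · obtain ⟨u, hu, hadj⟩ := hdom v hv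
      exact ⟨u, hu, Finset.mem_insert_of_mem (by rw [mem_neighborFinset]; exact hadj.symm)⟩
  have h1 : n ≤ (S.biUnion (fun s => insert s ((pathGraph n).neighborFinset s))).card := by
    have := Finset.card_le_card hcover
    simpa using this
  have h2 : (S.biUnion (fun s => insert s ((pathGraph n).neighborFinset s))).card ≤
      ∑ s ∈ S, (insert s ((pathGraph n).neighborFinset s)).card :=
    Finset.card_biUnion_le
  have h3 : ∀ s ∈ S, (insert s ((pathGraph n).neighborFinset s)).card ≤ 3 := by
    intro s _
    refine le_trans (Finset.card_insert_le _ _) ?_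
    have hdle : ((pathGraph n).neighborFinset s).card ≤ 2 := path_deg_le n s
    omega
  have h4 : ∑ s ∈ S, (insert s ((pathGraph n).neighborFinset s)).card ≤ 3 * S.card := by
    calc ∑ s ∈ S, (insert s ((pathGraph n).neighborFinset s)).card
        ≤ ∑ _s ∈ S, 3 := Finset.sum_le_sum h3
      _ = 3 * S.card := by rw [Finset.sum_const, smul_eq_mul, Nat.mul_comm]
  omega

theorem stmt_16 (n : ℕ) (hn : 3 ≤ n) :
    betaPack (SimpleGraph.pathGraph n) (1/3 : ℝ) = 0 ∧
      alphaDomNum (SimpleGraph.pathGraph n) (1/3 : ℝ) = ⌈(n : ℝ) / 3⌉₊ ∧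
      betaPack (SimpleGraph.pathGraph n) (1/3 : ℝ) <
        alphaDomNum (SimpleGraph.pathGraph n) (1/3 : ℝ) := by
  have hn0 : 0 < n := by omega
  -- beta packing number is 0
  have hpack : betaPack (pathGraph n) (1/3 : ℝ) = 0 := by
    have hset : {k : ℕ | ∃ S : Finset (Fin n), IsBetaPacking (pathGraph n) (1/3 : ℝ) S ∧
        S.card = k} = {0} := by
      ext k
      simp only [Set.mem_setOf_eq, Set.mem_singleton_iff]
      constructor
      · rintro ⟨S, ⟨hP, _⟩, rfl⟩
        rw [packprop_empty hn S hP]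
        rfl
      · rintro rfl
        refine ⟨∅, ⟨⟨?_, ?_⟩, ?_⟩, rfl⟩
        · intro h
          have h2 : (Finset.univ : Finset (Fin n)).card = n := by
            simp [Finset.card_univ, Fintype.card_fin]
          rw [← h] at h2
          simp at h2
          omega
        · intro v _
          simp only [Finset.inter_empty, Finset.card_empty, Nat.cast_zero]
          positivity
        · intro T hT _
          exact (packprop_empty hn T hT).symm
    rw [betaPack, hset, csSup_singleton]
  have hdomeq : alphaDomNum (pathGraph n) (1/3 : ℝ) = ⌈(n : ℝ) / 3⌉₊ := by
    set k := ⌈(n : ℝ) / 3⌉₊ with hk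
    have hk1 : n ≤ 3 * k := by
      have h1 : (n : ℝ) / 3 ≤ (k : ℝ) := Nat.le_ceil _
      have h2 : (n : ℝ) ≤ 3 * (k : ℝ) := by linarith
      exact_mod_cast h2
    have hk2 : 3 * k ≤ n + 2 := by
      have h1 : (k : ℝ) < (n : ℝ) / 3 + 1 := Nat.ceil_lt_add_one (by positivity)
      have h2 : 3 * (k : ℝ) < (n : ℝ) + 3 := by linarith
      have h3 : 3 * k < n + 3 := by exact_mod_cast h2
      omega
    -- the dominating set
    set S : Finset (Fin n) :=
      (Finset.range k).image (fun i => (⟨min (3 * i + 1) (n - 1), by omega⟩ : Fin n)) with hSdef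
    have hmem : ∀ v : Fin n, v ∈ S ↔ ∃ i, i < k ∧ min (3 * i + 1) (n - 1) = v.val := by
      intro v
      rw [hSdef, Finset.mem_image]
      constructor
      · rintro ⟨i, hi, hiv⟩
        exact ⟨i, Finset.mem_range.mp hi, congrArg Fin.val hiv⟩
      · rintro ⟨i, hi, hiv⟩
        exact ⟨i, Finset.mem_range.mpr hi, Fin.ext hiv⟩
    have hScard : S.card = k := by
      rw [hSdef, Finset.card_image_of_injOn, Finset.card_range]
      intro a ha b hb hab
      simp only [Finset.coe_range, Set.mem_Iio] at ha hb
      have hval := congrArg Fin.val hab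
      simp only at hval
      omega
    have hSdom : ∀ v : Fin n, v ∉ S → ∃ u ∈ S, (pathGraph n).Adj v u := by
      intro v hv
      rw [hmem] at hv
      push_neg at hv
      have hmn : v.val < n := v.isLt
      have hmod : v.val % 3 = 0 ∨ v.val % 3 = 1 ∨ v.val % 3 = 2 := by omega
      rcases hmod with h0 | h1 | h2
      · by_cases hlt : v.val + 1 < n
        · refine ⟨⟨v.val + 1, hlt⟩, ?_, ?_⟩
          · rw [hmem]
            exact ⟨v.val / 3, by omega,
              show min (3 * (v.val / 3) + 1) (n - 1) = v.val + 1 by omega⟩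
          · rw [pathGraph_adj]
            exact Or.inl rfl
        · exfalso
          have hcontra := hv (k - 1)
          exact hcontra (by omega) (show min (3 * (k - 1) + 1) (n - 1) = v.val by omega)
      · exfalso
        have hcontra := hv (v.val / 3)
        exact hcontra (by omega) (show min (3 * (v.val / 3) + 1) (n - 1) = v.val by omega)
      · refine ⟨⟨v.val - 1, by omega⟩, ?_, ?_⟩
        · rw [hmem]
          exact ⟨v.val / 3, by omega,
            show min (3 * (v.val / 3) + 1) (n - 1) = v.val - 1 by omega⟩
        · rw [pathGraph_adj]
          exact Or.inr (show v.val - 1 + 1 = v.val by omega)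
    have hSalpha : IsAlphaDom (pathGraph n) (1/3 : ℝ) S :=
      isAlphaDom_of_dom (path_deg_le n) hSdom
    have hlb : ∀ T : Finset (Fin n), IsAlphaDom (pathGraph n) (1/3 : ℝ) T → k ≤ T.card := by
      intro T hT
      have hdom := dom_of_isAlphaDom (fun v => path_deg_pos (by omega) v) hT
      have := path_dominating_lb T hdom
      omega
    apply le_antisymm
    · exact Nat.sInf_le ⟨S, hSalpha, hScard⟩
    · refine le_csInf ⟨k, S, hSalpha, hScard⟩ ?_
      rintro m ⟨T, hT, rfl⟩
      exact hlb T hT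
  refine ⟨hpack, hdomeq, ?_⟩
  rw [hpack, hdomeq]
  apply Nat.ceil_pos.mpr
  have hnr : (0 : ℝ) < (n : ℝ) := by exact_mod_cast hn0
  positivity
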